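/- arXiv:2304.00526 — 2 statements merged into one kernel-verified Lean document; each statement's English description precedes it below -/
import Mathlib

section
/- Let 0 < α < 1, let f_α be the one-sided stable density and f_α(x|t) = t^{-1/α} f_α(x t^{-1/α}) its conditional version at scale t > 0. Let γ > 0, β > αγ, θ > −αγ, and let P^γ_{α,β,θ} be the probability measure with density (Γ(β + θ)/Γ(γ + θ/α)) (I₊^{β−αγ} f_α(·|t))(1) t^{γ+θ/α−1} on (0, ∞). Then for every natural number n, its n-th moment is ∫_0^∞ t^n dP^γ_{α,β,θ}(t) = Γ(β + θ) Γ(γ + n + θ/α) / (Γ(γ + θ/α) Γ(β + α n + θ)). -/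
open MeasureTheory Real
open scoped ENNReal

/-- Riemann–Liouville fractional integral of order `ν > 0`. -/
noncomputable def RL (ν : ℝ) (f : ℝ → ℝ) (x : ℝ) : ℝ :=
  (1 / Real.Gamma ν) * ∫ u in (0:ℝ)..x, (x - u) ^ (ν - 1) * f u

/-- Conditional stable density at scale `t`: `f_α(x|t) = t^{-1/α} f_α(x t^{-1/α})`. -/
noncomputable def condStable (α : ℝ) (f : ℝ → ℝ) (t : ℝ) (x : ℝ) : ℝ :=
  t ^ (-(1/α)) * f (x * t ^ (-(1/α)))

/-- Three-parameter Mittag-Leffler (Prabhakar) function `E^γ_{α,β}(z)`. -/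
noncomputable def prabhakar (α β γ : ℝ) (z : ℝ) : ℝ :=
  (1 / Real.Gamma γ) *
    ∑' k : ℕ, Real.Gamma (γ + k) * z ^ k / ((k.factorial : ℝ) * Real.Gamma (α * k + β))

/-- One-parameter Mittag-Leffler function `E_α(z)`. -/
noncomputable def mittagLeffler (α : ℝ) (z : ℝ) : ℝ :=
  ∑' k : ℕ, z ^ k / Real.Gamma (α * k + 1)

section StableAux

open Set

variable {α : ℝ} {f : ℝ → ℝ}

lemma intOn_rpow_exp_mul {s y : ℝ} (hs : 0 < s) (hy : 0 < y) :
    IntegrableOn (fun r : ℝ => r ^ (s - 1) * Real.exp (-(y * r))) (Set.Ioi 0) := by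
  have h := integrableOn_rpow_mul_exp_neg_mul_rpow (p := 1) (s := s - 1) (b := y)
    (by linarith) zero_lt_one hy
  refine h.congr_fun (fun x hx => ?_) measurableSet_Ioi
  dsimp only
  rw [rpow_one]; ring_nf

lemma intOn_rpow_exp_rpow {α s : ℝ} (hα0 : 0 < α) (hs : 0 < s) :
    IntegrableOn (fun r : ℝ => r ^ (s - 1) * Real.exp (-r ^ α)) (Set.Ioi 0) := by
  have h0 : IntegrableOn (fun w : ℝ => Real.exp (-w) * w ^ (s / α - 1)) (Set.Ioi 0) :=
    Real.GammaIntegral_convergent (by positivity)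
  have h1 := (integrableOn_Ioi_comp_rpow_iff' (fun w => Real.exp (-w) * w ^ (s / α - 1))
    hα0.ne').2 h0
  refine h1.congr_fun (fun x hx => ?_) measurableSet_Ioi
  have hx0 : (0:ℝ) < x := hx
  dsimp only
  rw [smul_eq_mul, ← Real.rpow_mul hx0.le, mul_comm (Real.exp _), ← mul_assoc,
    ← Real.rpow_add hx0, show α - 1 + α * (s / α - 1) = s - 1 by field_simp; ring]

lemma lap_lint (hmeas : Measurable f) (hnn : ∀ x, 0 ≤ f x) (hint : Integrable f)
    (hlap : ∀ s > (0:ℝ),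
      (∫ x in Set.Ioi (0:ℝ), Real.exp (-(s * x)) * f x) = Real.exp (-(s ^ α)))
    {r : ℝ} (hr : 0 < r) :
    ∫⁻ y in Ioi 0, ENNReal.ofReal (Real.exp (-(r * y)) * f y)
      = ENNReal.ofReal (Real.exp (-(r ^ α))) := by
  have hi : IntegrableOn (fun y => Real.exp (-(r * y)) * f y) (Ioi 0) := by
    refine Integrable.mono' hint.integrableOn ?_ ?_
    · exact ((Real.measurable_exp.comp ((measurable_const.mul measurable_id).neg)).mul
        hmeas).aestronglyMeasurable
    · refine (ae_restrict_iff' measurableSet_Ioi).2 (.of_forall fun y hy => ?_)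
      have hy' : (0:ℝ) < y := hy
      have h1 : Real.exp (-(r * y)) ≤ 1 := by
        rw [Real.exp_le_one_iff, neg_nonpos]
        positivity
      rw [Real.norm_eq_abs, abs_of_nonneg (mul_nonneg (Real.exp_pos _).le (hnn y))]
      calc Real.exp (-(r * y)) * f y ≤ 1 * f y :=
            mul_le_mul_of_nonneg_right h1 (hnn y)
        _ = f y := one_mul _
  rw [← ofReal_integral_eq_lintegral_ofReal hi
    (.of_forall fun y => mul_nonneg (Real.exp_pos _).le (hnn y)), hlap r hr]

lemma moment_lint (hα0 : 0 < α) (hmeas : Measurable f) (hnn : ∀ x, 0 ≤ f x)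
    (hint : Integrable f)
    (hlap : ∀ s > (0:ℝ),
      (∫ x in Set.Ioi (0:ℝ), Real.exp (-(s * x)) * f x) = Real.exp (-(s ^ α)))
    {s : ℝ} (hs : 0 < s) :
    ∫⁻ y in Ioi 0, ENNReal.ofReal (y ^ (-s) * f y)
      = ENNReal.ofReal (Gamma (s / α) / (α * Gamma s)) := by
  have hΓ : 0 < Gamma s := Gamma_pos_of_pos hs
  have hc : (ENNReal.ofReal (Gamma s))⁻¹ ≠ ⊤ :=
    ENNReal.inv_ne_top.2 (ENNReal.ofReal_pos.2 hΓ).ne'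
  have key : ∀ y ∈ Ioi (0:ℝ), ENNReal.ofReal (y ^ (-s) * f y)
      = (ENNReal.ofReal (Gamma s))⁻¹ *
        ∫⁻ r in Ioi 0, ENNReal.ofReal (r ^ (s - 1) * Real.exp (-(r * y)) * f y) := by
    intro y hy
    have hy' : (0:ℝ) < y := hy
    have h1 : ∫⁻ r in Ioi 0, ENNReal.ofReal (r ^ (s - 1) * Real.exp (-(r * y)) * f y)
        = ENNReal.ofReal ((1 / y) ^ s * Gamma s * f y) := by
      have e0 : ∫ r in Ioi (0:ℝ), r ^ (s - 1) * Real.exp (-(r * y)) * f y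
          = (1 / y) ^ s * Gamma s * f y := by
        calc ∫ r in Ioi (0:ℝ), r ^ (s - 1) * Real.exp (-(r * y)) * f y
            = ∫ r in Ioi (0:ℝ), (r ^ (s - 1) * Real.exp (-(y * r))) * f y := by
              refine setIntegral_congr_fun measurableSet_Ioi fun r hr => ?_
              rw [mul_comm r y]
          _ = _ := by rw [MeasureTheory.integral_mul_const,
              Real.integral_rpow_mul_exp_neg_mul_Ioi hs hy']
      rw [← ofReal_integral_eq_lintegral_ofReal, e0]
      · exact IntegrableOn.congr_fun ((intOn_rpow_exp_mul hs hy').mul_const (f y))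
          (fun r hr => by rw [mul_comm y r]) measurableSet_Ioi
      · refine (ae_restrict_iff' measurableSet_Ioi).2 (.of_forall fun r hr => ?_)
        have hr' : (0:ℝ) < r := hr
        have := hnn y
        positivity
    rw [h1]
    have h2 : (1 / y) ^ s * Gamma s * f y = Gamma s * (y ^ (-s) * f y) := by
      rw [Real.rpow_neg hy'.le, one_div, Real.inv_rpow hy'.le]
      ring
    rw [h2, ENNReal.ofReal_mul hΓ.le, ← mul_assoc,
      ENNReal.inv_mul_cancel (ENNReal.ofReal_pos.2 hΓ).ne' ENNReal.ofReal_ne_top, one_mul]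
  rw [setLIntegral_congr_fun_ae measurableSet_Ioi (ae_of_all _ key),
    lintegral_const_mul' _ _ hc, lintegral_lintegral_swap]
  · have inner : ∀ r ∈ Ioi (0:ℝ),
        (∫⁻ y in Ioi 0, ENNReal.ofReal (r ^ (s - 1) * Real.exp (-(r * y)) * f y))
        = ENNReal.ofReal (r ^ (s - 1) * Real.exp (-r ^ α)) := by
      intro r hr
      have hr' : (0:ℝ) < r := hr
      have e1 : ∀ y : ℝ, ENNReal.ofReal (r ^ (s - 1) * Real.exp (-(r * y)) * f y)
          = ENNReal.ofReal (r ^ (s - 1)) * ENNReal.ofReal (Real.exp (-(r * y)) * f y) := by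
        intro y
        rw [mul_assoc, ENNReal.ofReal_mul (Real.rpow_nonneg hr'.le _)]
      simp_rw [e1]
      rw [lintegral_const_mul' _ _ ENNReal.ofReal_ne_top,
        lap_lint hmeas hnn hint hlap hr',
        ← ENNReal.ofReal_mul (Real.rpow_nonneg hr'.le _)]
    rw [setLIntegral_congr_fun_ae measurableSet_Ioi (ae_of_all _ inner),
      ← ofReal_integral_eq_lintegral_ofReal (intOn_rpow_exp_rpow hα0 hs)
        ((ae_restrict_iff' measurableSet_Ioi).2 (.of_forall fun r hr => by
          have hr' : (0:ℝ) < r := hr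
          positivity)),
      integral_rpow_mul_exp_neg_rpow hα0 (by linarith : (-1:ℝ) < s - 1)]
    rw [show s - 1 + 1 = s by ring]
    rw [show Gamma (s / α) / (α * Gamma s) = (1 / α * Gamma (s / α)) / Gamma s by
      field_simp]
    rw [ENNReal.ofReal_div_of_pos hΓ, ENNReal.div_eq_inv_mul]
  · apply Measurable.aemeasurable
    apply Measurable.ennreal_ofReal
    fun_prop

lemma moment_intOn (hα0 : 0 < α) (hmeas : Measurable f) (hnn : ∀ x, 0 ≤ f x)
    (hint : Integrable f)
    (hlap : ∀ s > (0:ℝ),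
      (∫ x in Set.Ioi (0:ℝ), Real.exp (-(s * x)) * f x) = Real.exp (-(s ^ α)))
    {s : ℝ} (hs : 0 < s) :
    IntegrableOn (fun y : ℝ => y ^ (-s) * f y) (Ioi 0) := by
  have hm : AEStronglyMeasurable (fun y : ℝ => y ^ (-s) * f y) (volume.restrict (Ioi 0)) := by
    apply Measurable.aestronglyMeasurable; fun_prop
  have hnn' : 0 ≤ᵐ[volume.restrict (Ioi 0)] fun y : ℝ => y ^ (-s) * f y := by
    refine (ae_restrict_iff' measurableSet_Ioi).2 (.of_forall fun y hy => ?_)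
    have hy' : (0:ℝ) < y := hy
    have := hnn y
    positivity
  refine ⟨hm, ?_⟩
  rw [hasFiniteIntegral_iff_ofReal hnn', moment_lint hα0 hmeas hnn hint hlap hs]
  exact ENNReal.ofReal_lt_top

lemma moment_val (hα0 : 0 < α) (hmeas : Measurable f) (hnn : ∀ x, 0 ≤ f x)
    (hint : Integrable f)
    (hlap : ∀ s > (0:ℝ),
      (∫ x in Set.Ioi (0:ℝ), Real.exp (-(s * x)) * f x) = Real.exp (-(s ^ α)))
    {s : ℝ} (hs : 0 < s) :
    ∫ y in Ioi (0:ℝ), y ^ (-s) * f y = Gamma (s / α) / (α * Gamma s) := by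
  have hnn' : 0 ≤ᵐ[volume.restrict (Ioi 0)] fun y : ℝ => y ^ (-s) * f y := by
    refine (ae_restrict_iff' measurableSet_Ioi).2 (.of_forall fun y hy => ?_)
    have hy' : (0:ℝ) < y := hy
    have := hnn y
    positivity
  rw [integral_eq_lintegral_of_nonneg_ae hnn'
      (by apply Measurable.aestronglyMeasurable; fun_prop),
    moment_lint hα0 hmeas hnn hint hlap hs, ENNReal.toReal_ofReal]
  have h1 : 0 < Gamma (s / α) := Gamma_pos_of_pos (by positivity)
  have h2 : 0 < Gamma s := Gamma_pos_of_pos hs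
  positivity

lemma tint (hα0 : 0 < α) (hmeas : Measurable f) (hnn : ∀ x, 0 ≤ f x)
    (hint : Integrable f)
    (hlap : ∀ s > (0:ℝ),
      (∫ x in Set.Ioi (0:ℝ), Real.exp (-(s * x)) * f x) = Real.exp (-(s ^ α)))
    {u q : ℝ} (hu : 0 < u) (hq : 0 < q) :
    IntegrableOn (fun t : ℝ => t ^ (q - 1 - 1/α) * f (u * t ^ (-(1/α)))) (Ioi 0) ∧
    ∫ t in Ioi (0:ℝ), t ^ (q - 1 - 1/α) * f (u * t ^ (-(1/α)))
      = u ^ (α * q - 1) * (Gamma q / Gamma (α * q)) := by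
  have hαq : 0 < α * q := by positivity
  set p : ℝ := -(1/α) with hpdef
  have hp : p ≠ 0 := by
    rw [hpdef]; simp [ne_eq, hα0.ne']
  set g : ℝ → ℝ := fun w => α * (w ^ (-(α * q)) * f (u * w)) with hgdef
  set G : ℝ → ℝ := fun z => α * ((z / u) ^ (-(α * q)) * f z) with hGdef
  have hgG : ∀ y : ℝ, G (u * y) = g y := by
    intro y
    simp only [hGdef, hgdef, mul_div_cancel_left₀ y hu.ne']
  have hGz : ∀ z ∈ Ioi (0:ℝ), G z = (α * u ^ (α * q)) * (z ^ (-(α * q)) * f z) := by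
    intro z hz
    have hz' : (0:ℝ) < z := hz
    simp only [hGdef]
    have h3 : (0:ℝ) < u ^ (α * q) := Real.rpow_pos_of_pos hu _
    rw [Real.div_rpow hz'.le hu.le, Real.rpow_neg hu.le]
    field_simp
  have claimA : ∀ t ∈ Ioi (0:ℝ),
      (|p| * t ^ (p - 1)) • g (t ^ p) = t ^ (q - 1 - 1/α) * f (u * t ^ p) := by
    intro t ht
    have ht' : (0:ℝ) < t := ht
    have habs : |p| = 1/α := by
      rw [hpdef, abs_neg, abs_of_pos (by positivity)]
    have hexp : (t ^ p) ^ (-(α * q)) = t ^ q := by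
      rw [← Real.rpow_mul ht'.le, hpdef]
      congr 1
      field_simp
    have ht2 : t ^ (p - 1) * t ^ q = t ^ (q - 1 - 1/α) := by
      rw [← Real.rpow_add ht']
      congr 1
      rw [hpdef]; ring
    simp only [hgdef, smul_eq_mul, hexp, habs]
    rw [show (1:ℝ)/α * t ^ (p - 1) * (α * (t ^ q * f (u * t ^ p)))
        = (α * (1/α)) * ((t ^ (p - 1) * t ^ q) * f (u * t ^ p)) by ring,
      mul_one_div_cancel hα0.ne', one_mul, ht2]
  have M0 : IntegrableOn (fun z : ℝ => z ^ (-(α * q)) * f z) (Ioi 0) :=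
    moment_intOn hα0 hmeas hnn hint hlap hαq
  have M1 : IntegrableOn G (Ioi 0) := by
    refine IntegrableOn.congr_fun (M0.const_mul (α * u ^ (α * q))) ?_ measurableSet_Ioi
    intro z hz
    exact (hGz z hz).symm
  have M2 : IntegrableOn (fun y : ℝ => G (u * y)) (Ioi 0) := by
    refine (integrableOn_Ioi_comp_mul_left_iff G 0 hu).2 ?_
    rwa [mul_zero]
  have M3 : IntegrableOn g (Ioi 0) := by
    refine M2.congr_fun (fun y _ => hgG y) measurableSet_Ioi
  have M4 : IntegrableOn (fun t : ℝ => (|p| * t ^ (p - 1)) • g (t ^ p)) (Ioi 0) :=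
    (integrableOn_Ioi_comp_rpow_iff g hp).2 M3
  have M5 : IntegrableOn (fun t : ℝ => t ^ (q - 1 - 1/α) * f (u * t ^ (-(1/α)))) (Ioi 0) :=
    M4.congr_fun claimA measurableSet_Ioi
  refine ⟨M5, ?_⟩
  have hval : ∫ t in Ioi (0:ℝ), t ^ (q - 1 - 1/α) * f (u * t ^ (-(1/α)))
      = ∫ y in Ioi (0:ℝ), g y := by
    rw [← integral_comp_rpow_Ioi g hp]
    exact (setIntegral_congr_fun measurableSet_Ioi claimA).symm
  rw [hval]
  have hval2 : ∫ y in Ioi (0:ℝ), g y = ∫ y in Ioi (0:ℝ), G (u * y) := by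
    refine setIntegral_congr_fun measurableSet_Ioi fun y _ => (hgG y).symm
  rw [hval2, integral_comp_mul_left_Ioi G 0 hu, mul_zero,
    setIntegral_congr_fun measurableSet_Ioi hGz, MeasureTheory.integral_const_mul,
    moment_val hα0 hmeas hnn hint hlap hαq, smul_eq_mul,
    show α * q / α = q by field_simp]
  rw [show α * q - 1 = α * q + (-1) by ring, Real.rpow_add hu, Real.rpow_neg_one]
  field_simp

lemma beta_val {a b : ℝ} (ha : 0 < a) (hb : 0 < b) :
    IntegrableOn (fun u : ℝ => u ^ (a - 1) * (1 - u) ^ (b - 1)) (Ioo (0:ℝ) 1) ∧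
    ∫ u in Ioo (0:ℝ) 1, u ^ (a - 1) * (1 - u) ^ (b - 1)
      = Gamma a * Gamma b / Gamma (a + b) := by
  have ha' : 0 < (a : ℂ).re := by simpa using ha
  have hb' : 0 < (b : ℂ).re := by simpa using hb
  have hpt : ∀ x ∈ Ioo (0:ℝ) 1,
      (x : ℂ) ^ ((a:ℂ) - 1) * ((1:ℂ) - x) ^ ((b:ℂ) - 1)
        = ((x ^ (a - 1) * (1 - x) ^ (b - 1) : ℝ) : ℂ) := by
    intro x hx
    rw [Complex.ofReal_mul, Complex.ofReal_cpow hx.1.le,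
      Complex.ofReal_cpow (by linarith [hx.2] : (0:ℝ) ≤ 1 - x)]
    push_cast
    ring_nf
  have hbeta : Complex.betaIntegral a b
      = ((∫ u in Ioo (0:ℝ) 1, u ^ (a - 1) * (1 - u) ^ (b - 1) : ℝ) : ℂ) := by
    rw [Complex.betaIntegral, intervalIntegral.integral_of_le zero_le_one,
      MeasureTheory.integral_Ioc_eq_integral_Ioo,
      setIntegral_congr_fun measurableSet_Ioo hpt]
    exact integral_ofReal
  have hintOn : IntegrableOn (fun u : ℝ => u ^ (a - 1) * (1 - u) ^ (b - 1)) (Ioo (0:ℝ) 1) := by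
    have C := Complex.betaIntegral_convergent ha' hb'
    have C2 : IntegrableOn (fun x : ℝ => (x : ℂ) ^ ((a:ℂ) - 1) * ((1:ℂ) - x) ^ ((b:ℂ) - 1))
        (Ioo (0:ℝ) 1) := by
      refine IntegrableOn.mono_set ?_ Ioo_subset_Ioc_self
      exact (intervalIntegrable_iff_integrableOn_Ioc_of_le zero_le_one).1 C
    refine IntegrableOn.congr_fun C2.re ?_ measurableSet_Ioo
    intro x hx
    show ((x : ℂ) ^ ((a:ℂ) - 1) * ((1:ℂ) - x) ^ ((b:ℂ) - 1)).re = _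
    rw [hpt x hx, Complex.ofReal_re]
  refine ⟨hintOn, ?_⟩
  have key := Complex.Gamma_mul_Gamma_eq_betaIntegral ha' hb'
  rw [hbeta, Complex.Gamma_ofReal, Complex.Gamma_ofReal, ← Complex.ofReal_add,
    Complex.Gamma_ofReal, ← Complex.ofReal_mul, ← Complex.ofReal_mul] at key
  have key' : Gamma a * Gamma b
      = Gamma (a + b) * ∫ u in Ioo (0:ℝ) 1, u ^ (a - 1) * (1 - u) ^ (b - 1) :=
    Complex.ofReal_inj.1 key
  have hG : 0 < Gamma (a + b) := Gamma_pos_of_pos (by positivity)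
  field_simp
  linarith [key']

end StableAux

open Set

theorem stmt_11 (α : ℝ) (hα0 : 0 < α) (hα1 : α < 1)
    (f : ℝ → ℝ) (hmeas : Measurable f) (hnn : ∀ x, 0 ≤ f x)
    (hint : Integrable f) (hsupp : ∀ x < (0:ℝ), f x = 0)
    (hlap : ∀ s > (0:ℝ),
      (∫ x in Set.Ioi (0:ℝ), Real.exp (-(s * x)) * f x) = Real.exp (-(s ^ α)))
    (γ β θ : ℝ) (hγ : 0 < γ) (hβ : α * γ < β) (hθ : -(α * γ) < θ) :
    ∀ n : ℕ,
      (∫ t in Set.Ioi (0:ℝ),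
          (t : ℝ) ^ n * (Real.Gamma (β + θ) / Real.Gamma (γ + θ / α) *
            (RL (β - α * γ) (condStable α f t) 1 * t ^ (γ + θ / α - 1))))
        = Real.Gamma (β + θ) * Real.Gamma (γ + n + θ / α) /
            (Real.Gamma (γ + θ / α) * Real.Gamma (β + α * n + θ)) := by
  intro n
  set ν : ℝ := β - α * γ with hνdef
  have hν : 0 < ν := by simp only [hνdef]; linarith
  set q : ℝ := γ + (n : ℝ) + θ / α with hqdef
  have hθα : -γ < θ / α := by
    rw [lt_div_iff₀ hα0]
    nlinarith
  have hn0 : (0:ℝ) ≤ (n:ℝ) := Nat.cast_nonneg n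
  have hq : 0 < q := by simp only [hqdef]; linarith
  have hαq : α * q = α * γ + α * n + θ := by
    simp only [hqdef]
    field_simp
  have hαq' : 0 < α * q := by rw [hαq]; nlinarith
  have hsum : ν + α * q = β + α * n + θ := by rw [hαq, hνdef]; ring
  have hΓν : 0 < Gamma ν := Gamma_pos_of_pos hν
  have hΓq : 0 < Gamma q := Gamma_pos_of_pos hq
  have hΓαq : 0 < Gamma (α * q) := Gamma_pos_of_pos hαq'
  have hΓs : 0 < Gamma (ν + α * q) := Gamma_pos_of_pos (by positivity)
  have hΓp : 0 < Gamma (γ + θ / α) := Gamma_pos_of_pos (by linarith)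
  set G : ℝ → ℝ≥0∞ := fun t => ∫⁻ u in Ioo (0:ℝ) 1,
    ENNReal.ofReal ((1 - u) ^ (ν - 1) * (t ^ (-(1/α)) * f (u * t ^ (-(1/α))))) with hGdef
  have hGmeas : Measurable G := by
    rw [hGdef]
    exact Measurable.lintegral_prod_right'
      (f := fun p : ℝ × ℝ => ENNReal.ofReal
        ((1 - p.2) ^ (ν - 1) * (p.1 ^ (-(1/α)) * f (p.2 * p.1 ^ (-(1/α))))))
      (by apply Measurable.ennreal_ofReal; fun_prop)
  have L : ∫⁻ t in Ioi (0:ℝ), ENNReal.ofReal (t ^ (q - 1)) * G t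
      = ENNReal.ofReal (Gamma q * Gamma ν / Gamma (ν + α * q)) := by
    have step1 : ∀ t ∈ Ioi (0:ℝ), ENNReal.ofReal (t ^ (q - 1)) * G t
        = ∫⁻ u in Ioo (0:ℝ) 1, ENNReal.ofReal ((1 - u) ^ (ν - 1)) *
            ENNReal.ofReal (t ^ (q - 1 - 1/α) * f (u * t ^ (-(1/α)))) := by
      intro t ht
      have ht' : (0:ℝ) < t := ht
      rw [hGdef, ← lintegral_const_mul' _ _ ENNReal.ofReal_ne_top]
      refine setLIntegral_congr_fun_ae measurableSet_Ioo (ae_of_all _ fun u hu => ?_)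
      have h1u : (0:ℝ) ≤ 1 - u := by linarith [hu.2]
      rw [← ENNReal.ofReal_mul (rpow_nonneg ht'.le _),
        ← ENNReal.ofReal_mul (rpow_nonneg h1u _)]
      congr 1
      rw [show q - 1 - 1/α = (q - 1) + -(1/α) by ring, Real.rpow_add ht']
      ring
    rw [setLIntegral_congr_fun_ae measurableSet_Ioi (ae_of_all _ step1),
      lintegral_lintegral_swap]
    · have step3 : ∀ u ∈ Ioo (0:ℝ) 1,
          (∫⁻ t in Ioi (0:ℝ), ENNReal.ofReal ((1 - u) ^ (ν - 1)) *
            ENNReal.ofReal (t ^ (q - 1 - 1/α) * f (u * t ^ (-(1/α)))))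
          = ENNReal.ofReal (u ^ (α * q - 1) * (1 - u) ^ (ν - 1)) *
              ENNReal.ofReal (Gamma q / Gamma (α * q)) := by
        intro u hu
        have hu0 : (0:ℝ) < u := hu.1
        have h1u : (0:ℝ) ≤ 1 - u := by linarith [hu.2]
        have tl : ∫⁻ t in Ioi (0:ℝ),
              ENNReal.ofReal (t ^ (q - 1 - 1/α) * f (u * t ^ (-(1/α))))
            = ENNReal.ofReal (u ^ (α * q - 1) * (Gamma q / Gamma (α * q))) := by
          rw [← ofReal_integral_eq_lintegral_ofReal
            (tint hα0 hmeas hnn hint hlap hu0 hq).1 ?_,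
            (tint hα0 hmeas hnn hint hlap hu0 hq).2]
          refine (ae_restrict_iff' measurableSet_Ioi).2 (.of_forall fun t ht => ?_)
          have ht' : (0:ℝ) < t := ht
          have := hnn (u * t ^ (-(1/α)))
          positivity
        rw [lintegral_const_mul' _ _ ENNReal.ofReal_ne_top, tl,
          ← ENNReal.ofReal_mul (rpow_nonneg h1u _),
          show (1 - u) ^ (ν - 1) * (u ^ (α * q - 1) * (Gamma q / Gamma (α * q)))
            = u ^ (α * q - 1) * (1 - u) ^ (ν - 1) * (Gamma q / Gamma (α * q)) from by ring,
          ENNReal.ofReal_mul (mul_nonneg (rpow_nonneg hu0.le _) (rpow_nonneg h1u _))]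
      rw [setLIntegral_congr_fun_ae measurableSet_Ioo (ae_of_all _ step3),
        lintegral_mul_const' _ _ ENNReal.ofReal_ne_top,
        ← ofReal_integral_eq_lintegral_ofReal (beta_val hαq' hν).1 ?_,
        (beta_val hαq' hν).2, ← ENNReal.ofReal_mul (by positivity)]
      · congr 1
        rw [add_comm (α * q) ν]
        rw [div_mul_div_comm]
        rw [mul_comm (Gamma (α * q)) (Gamma ν), mul_assoc, mul_comm (Gamma (α * q)) (Gamma q),
          ← mul_assoc, mul_div_mul_right _ _ hΓαq.ne']
        ring
      · refine (ae_restrict_iff' measurableSet_Ioo).2 (.of_forall fun u hu => ?_)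
        have hu0 : (0:ℝ) < u := hu.1
        have h1u : (0:ℝ) ≤ 1 - u := by linarith [hu.2]
        positivity
    · apply Measurable.aemeasurable
      refine Measurable.fun_mul ?_ ?_ <;> apply Measurable.ennreal_ofReal <;> fun_prop
  -- finiteness
  have hLmeas : Measurable fun t : ℝ => ENNReal.ofReal (t ^ (q - 1)) * G t := by
    refine Measurable.mul ?_ hGmeas
    apply Measurable.ennreal_ofReal
    fun_prop
  have hfin : ∀ᵐ t ∂(volume.restrict (Ioi (0:ℝ))),
      ENNReal.ofReal (t ^ (q - 1)) * G t < ⊤ :=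
    ae_lt_top hLmeas (by rw [L]; exact ENNReal.ofReal_ne_top)
  have hGfin : ∀ᵐ t ∂(volume.restrict (Ioi (0:ℝ))), G t ≠ ⊤ := by
    filter_upwards [hfin, ae_restrict_mem measurableSet_Ioi] with t h1 h2
    intro hG
    rw [hG, ENNReal.mul_top (ENNReal.ofReal_pos.2 (rpow_pos_of_pos h2 _)).ne'] at h1
    exact absurd h1 (lt_irrefl ⊤)
  -- RL in terms of G
  have hRL : ∀ t ∈ Ioi (0:ℝ), RL ν (condStable α f t) 1 = (1 / Gamma ν) * (G t).toReal := by
    intro t ht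
    have ht' : (0:ℝ) < t := ht
    rw [RL]
    congr 1
    rw [intervalIntegral.integral_of_le zero_le_one,
      MeasureTheory.integral_Ioc_eq_integral_Ioo,
      integral_eq_lintegral_of_nonneg_ae ?_ ?_]
    · rw [hGdef]
      congr 1
    · refine (ae_restrict_iff' measurableSet_Ioo).2 (.of_forall fun u hu => ?_)
      have h1u : (0:ℝ) ≤ 1 - u := by linarith [hu.2]
      simp only [condStable]
      have := hnn (u * t ^ (-(1/α)))
      positivity
    · apply Measurable.aestronglyMeasurable
      simp only [condStable]
      fun_prop
  -- rewrite the integrand a.e.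
  have claim : ∀ t ∈ Ioi (0:ℝ),
      (t : ℝ) ^ n * (Gamma (β + θ) / Gamma (γ + θ / α) *
        (RL ν (condStable α f t) 1 * t ^ (γ + θ / α - 1)))
      = (Gamma (β + θ) / Gamma (γ + θ / α) * (1 / Gamma ν)) *
          (t ^ (q - 1) * (G t).toReal) := by
    intro t ht
    have ht' : (0:ℝ) < t := ht
    rw [hRL t ht]
    have hpow : (t : ℝ) ^ n * t ^ (γ + θ / α - 1) = t ^ (q - 1) := by
      rw [← Real.rpow_natCast t n, ← Real.rpow_add ht', hqdef]
      congr 1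
      ring
    rw [show (t : ℝ) ^ n * (Gamma (β + θ) / Gamma (γ + θ / α) *
          ((1 / Gamma ν) * (G t).toReal * t ^ (γ + θ / α - 1)))
        = (Gamma (β + θ) / Gamma (γ + θ / α) * (1 / Gamma ν)) *
          (((t : ℝ) ^ n * t ^ (γ + θ / α - 1)) * (G t).toReal) by ring, hpow]
  rw [setIntegral_congr_fun measurableSet_Ioi claim, MeasureTheory.integral_const_mul]
  have hval : ∫ t in Ioi (0:ℝ), t ^ (q - 1) * (G t).toReal
      = Gamma q * Gamma ν / Gamma (ν + α * q) := by
    rw [integral_eq_lintegral_of_nonneg_ae ?_ ?_]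
    · have e : ∫⁻ t in Ioi (0:ℝ), ENNReal.ofReal (t ^ (q - 1) * (G t).toReal)
          = ∫⁻ t in Ioi (0:ℝ), ENNReal.ofReal (t ^ (q - 1)) * G t := by
        refine lintegral_congr_ae ?_
        filter_upwards [hGfin, ae_restrict_mem measurableSet_Ioi] with t h1 h2
        rw [ENNReal.ofReal_mul (rpow_nonneg h2.le _), ENNReal.ofReal_toReal h1]
      rw [e, L, ENNReal.toReal_ofReal (by positivity)]
    · refine (ae_restrict_iff' measurableSet_Ioi).2 (.of_forall fun t ht => ?_)
      have ht' : (0:ℝ) < t := ht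
      have := ENNReal.toReal_nonneg (a := G t)
      positivity
    · apply Measurable.aestronglyMeasurable
      exact (by fun_prop : Measurable fun t : ℝ => t ^ (q - 1)).mul hGmeas.ennreal_toReal
  have fieldeq : ∀ A B C D E : ℝ, B ≠ 0 → C ≠ 0 → E ≠ 0 →
      A / B * (1 / C) * (D * C / E) = A * D / (B * E) := by
    intro A B C D E hB hC hE
    field_simp
  rw [hval, ← hsum]
  exact fieldeq _ _ _ _ _ hΓp.ne' hΓν.ne' hΓs.ne'
end

section
/- Let 0 < α < 1 and let f_α be the one-sided stable density. Then for every λ ≥ 0 the one-parameter Mittag-Leffler function E_α(−λ) is the Laplace transform of the Pollard density: E_α(−λ) = (1/α) ∫_0^∞ e^{−λ t} f_α(t^{−1/α}) t^{−1/α−1} dt. In particular λ ↦ E_α(−λ) is completely monotone on (0, ∞). -/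
open MeasureTheory Real

open Set Filter Topology
open scoped ENNReal NNReal

section Helpers

variable {α : ℝ} {f : ℝ → ℝ}

lemma pow_mul_exp_le_aux (m : ℕ) {c y : ℝ} (hc : 0 < c) (hy : 0 ≤ y) :
    y ^ m * Real.exp (-(c * y)) ≤ (m.factorial : ℝ) * (2 / c) ^ m := by
  have hx : 0 ≤ c * y / 2 := by positivity
  have h1 : (c * y / 2) ^ m / (m.factorial : ℝ) ≤ Real.exp (c * y / 2) := by
    calc (c * y / 2) ^ m / (m.factorial : ℝ)
        ≤ ∑ i ∈ Finset.range (m + 1), (c * y / 2) ^ i / (i.factorial : ℝ) := by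
          refine Finset.single_le_sum (f := fun i => (c * y / 2) ^ i / (i.factorial : ℝ))
            (fun i _ => by positivity) (Finset.self_mem_range_succ m)
      _ ≤ Real.exp (c * y / 2) := Real.sum_le_exp_of_nonneg hx _
  have h2 : y ^ m ≤ (m.factorial : ℝ) * (2 / c) ^ m * Real.exp (c * y / 2) := by
    have hfac : (0:ℝ) < (m.factorial : ℝ) := by positivity
    have : (c * y / 2) ^ m ≤ (m.factorial : ℝ) * Real.exp (c * y / 2) := by
      rw [div_le_iff₀ hfac] at h1; linarith [h1]
    have hyeq : y ^ m = (2 / c) ^ m * (c * y / 2) ^ m := by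
      rw [← mul_pow]; field_simp
    rw [hyeq]
    calc (2 / c) ^ m * (c * y / 2) ^ m
        ≤ (2 / c) ^ m * ((m.factorial : ℝ) * Real.exp (c * y / 2)) := by
          refine mul_le_mul_of_nonneg_left this (by positivity)
      _ = (m.factorial : ℝ) * (2 / c) ^ m * Real.exp (c * y / 2) := by ring
  have h3 : y ^ m * Real.exp (-(c * y)) ≤
      (m.factorial : ℝ) * (2 / c) ^ m * Real.exp (c * y / 2) * Real.exp (-(c * y)) := by
    exact mul_le_mul_of_nonneg_right h2 (Real.exp_nonneg _)
  refine h3.trans ?_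
  rw [mul_assoc, mul_assoc, ← Real.exp_add]
  have : Real.exp (c * y / 2 + -(c * y)) ≤ 1 := by
    rw [Real.exp_le_one_iff]; linarith
  calc (m.factorial : ℝ) * ((2 / c) ^ m * Real.exp (c * y / 2 + -(c * y)))
      ≤ (m.factorial : ℝ) * ((2 / c) ^ m * 1) := by
        refine mul_le_mul_of_nonneg_left ?_ (by positivity)
        exact mul_le_mul_of_nonneg_left this (by positivity)
    _ = (m.factorial : ℝ) * (2 / c) ^ m := by ring

lemma gamma_ratio_le_aux {α : ℝ} (hα0 : 0 < α) (hα1 : α < 1) {x : ℝ} (hx : 0 < x) :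
    Real.Gamma (x + 1) ≤ Real.Gamma (x + α) * (x + α) ^ (1 - α) := by
  have hxα : (0:ℝ) < x + α := by linarith
  have hxα1 : (0:ℝ) < x + 1 + α := by linarith
  have h := Real.convexOn_log_Gamma.2 (mem_Ioi.mpr hxα) (mem_Ioi.mpr hxα1)
    hα0.le (by linarith : (0:ℝ) ≤ 1 - α) (by ring)
  simp only [smul_eq_mul, Function.comp_apply] at h
  have harg : α * (x + α) + (1 - α) * (x + 1 + α) = x + 1 := by ring
  rw [harg] at h
  have hG1 : Real.Gamma (x + 1 + α) = (x + α) * Real.Gamma (x + α) := by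
    rw [show x + 1 + α = (x + α) + 1 by ring, Real.Gamma_add_one hxα.ne']
  have hGpos : 0 < Real.Gamma (x + α) := Real.Gamma_pos_of_pos hxα
  have hG1pos : 0 < Real.Gamma (x + 1) := Real.Gamma_pos_of_pos (by linarith)
  rw [hG1, Real.log_mul hxα.ne' hGpos.ne'] at h
  have hrhs : α * Real.log (Real.Gamma (x + α))
      + (1 - α) * (Real.log (x + α) + Real.log (Real.Gamma (x + α)))
      = Real.log (Real.Gamma (x + α) * (x + α) ^ (1 - α)) := by
    rw [Real.log_mul hGpos.ne' (Real.rpow_pos_of_pos hxα _).ne', Real.log_rpow hxα]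
    ring
  rw [hrhs] at h
  have := Real.exp_le_exp.mpr h
  rwa [Real.exp_log hG1pos, Real.exp_log (by positivity)] at this

lemma ml_summable {α : ℝ} (hα0 : 0 < α) (hα1 : α < 1) {l : ℝ} (hl : 0 ≤ l) :
    Summable (fun k : ℕ => l ^ k / Real.Gamma (α * k + 1)) := by
  rcases eq_or_lt_of_le hl with rfl | hl
  · apply summable_of_ne_finset_zero (s := {0})
    intro k hk
    have : k ≠ 0 := by simpa using hk
    simp [zero_pow this]
  -- positive case, ratio test
  have hpos : ∀ k : ℕ, 0 < α * k + 1 := fun k => by positivity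
  have hGpos : ∀ k : ℕ, 0 < Real.Gamma (α * k + 1) := fun k => Real.Gamma_pos_of_pos (hpos k)
  -- ratio bound
  have hratio : ∀ k : ℕ, l ^ (k+1) / Real.Gamma (α * (k+1) + 1)
      ≤ (l * (α * k + 1 + α) ^ (1 - α) / (α * k + 1)) * (l ^ k / Real.Gamma (α * k + 1)) := by
    intro k
    set x : ℝ := α * k + 1 with hxdef
    have hx : 0 < x := hpos k
    have hxα : 0 < x + α := by linarith
    have key : Real.Gamma (x + 1) ≤ Real.Gamma (x + α) * (x + α) ^ (1 - α) :=
      gamma_ratio_le_aux hα0 hα1 hx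
    have hG1 : Real.Gamma (x + 1) = x * Real.Gamma x := Real.Gamma_add_one hx.ne'
    have hGx : 0 < Real.Gamma x := Real.Gamma_pos_of_pos hx
    have hGxα : 0 < Real.Gamma (x + α) := Real.Gamma_pos_of_pos hxα
    have hrp : 0 < (x + α) ^ (1 - α) := Real.rpow_pos_of_pos hxα _
    -- Gamma x / Gamma (x+α) ≤ (x+α)^(1-α)/x
    have h2 : Real.Gamma x / Real.Gamma (x + α) ≤ (x + α) ^ (1 - α) / x := by
      rw [div_le_div_iff₀ hGxα hx]
      nlinarith [key, hG1]
    have harg : α * ((k:ℝ)+1) + 1 = x + α := by push_cast; ring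
    rw [harg]
    have : l ^ (k+1) / Real.Gamma (x + α)
        = (l * (Real.Gamma x / Real.Gamma (x + α))) * (l ^ k / Real.Gamma x) := by
      field_simp
      ring
    rw [this]
    have hnn : 0 ≤ l ^ k / Real.Gamma x := by positivity
    refine mul_le_mul_of_nonneg_right ?_ hnn
    calc l * (Real.Gamma x / Real.Gamma (x + α)) ≤ l * ((x + α) ^ (1 - α) / x) :=
          mul_le_mul_of_nonneg_left h2 hl.le
      _ = l * (x + α) ^ (1 - α) / x := by ring
  -- the coefficient tends to 0
  have htend : Tendsto (fun k : ℕ => l * (α * k + 1 + α) ^ (1 - α) / (α * k + 1)) atTop (𝓝 0) := by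
    have h1 : Tendsto (fun k : ℕ => (α * k + 1 : ℝ)) atTop atTop := by
      apply Filter.tendsto_atTop_add_const_right
      exact Tendsto.const_mul_atTop hα0 tendsto_natCast_atTop_atTop
    have hb : Tendsto (fun k : ℕ => 2 * l * (α * k + 1) ^ (-α)) atTop (𝓝 0) := by
      have := (tendsto_rpow_neg_atTop hα0).comp h1
      have h2 := this.const_mul (2 * l)
      simpa using h2
    have hsq : ∀ᶠ k : ℕ in atTop, |l * (α * k + 1 + α) ^ (1 - α) / (α * k + 1)|
        ≤ 2 * l * (α * k + 1) ^ (-α) := by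
      filter_upwards [eventually_atTop.mpr ⟨1, fun k hk => hk⟩] with k hk
      have hx : (1:ℝ) ≤ α * k + 1 := by
        have : (0:ℝ) ≤ α * k := by positivity
        linarith
      have hxpos : (0:ℝ) < α * k + 1 := by linarith
      have hle : α * k + 1 + α ≤ 2 * (α * k + 1) := by linarith
      have h3 : (α * k + 1 + α) ^ (1 - α) ≤ (2 * (α * k + 1)) ^ (1 - α) :=
        Real.rpow_le_rpow (by positivity) hle (by linarith)
      have h4 : (2 * (α * k + 1)) ^ (1 - α) ≤ 2 * (α * k + 1) ^ (1 - α) := by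
        rw [Real.mul_rpow (by norm_num) (by positivity)]
        refine mul_le_mul_of_nonneg_right ?_ (by positivity)
        calc (2:ℝ) ^ (1 - α) ≤ 2 ^ (1:ℝ) :=
              Real.rpow_le_rpow_of_exponent_le (by norm_num) (by linarith)
          _ = 2 := by norm_num
      have h5 : (α * k + 1) ^ (1 - α) = (α * k + 1) ^ (-α) * (α * k + 1) := by
        rw [← Real.rpow_add_one hxpos.ne']; congr 1; ring
      have hnn : 0 ≤ l * (α * k + 1 + α) ^ (1 - α) / (α * k + 1) := by positivity
      rw [abs_of_nonneg hnn]
      calc l * (α * k + 1 + α) ^ (1 - α) / (α * k + 1)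
          ≤ l * (2 * (α * k + 1) ^ (1 - α)) / (α * k + 1) := by
            gcongr
            exact h3.trans h4
        _ = 2 * l * (α * k + 1) ^ (-α) := by
            rw [h5]; field_simp
    exact squeeze_zero_norm' hsq hb
  have hev : ∀ᶠ k : ℕ in atTop,
      ‖l ^ (k+1) / Real.Gamma (α * (k+1) + 1)‖ ≤ (1/2 : ℝ) * ‖l ^ k / Real.Gamma (α * k + 1)‖ := by
    filter_upwards [htend.eventually (eventually_le_nhds (by norm_num : (0:ℝ) < 1/2))] with k hk
    have hnn1 : 0 ≤ l ^ (k+1) / Real.Gamma (α * (k+1) + 1) := by positivity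
    have hnn2 : 0 ≤ l ^ k / Real.Gamma (α * k + 1) := by positivity
    rw [Real.norm_eq_abs, Real.norm_eq_abs, abs_of_nonneg hnn1, abs_of_nonneg hnn2]
    calc l ^ (k+1) / Real.Gamma (α * (k+1) + 1)
        ≤ (l * (α * k + 1 + α) ^ (1 - α) / (α * k + 1)) * (l ^ k / Real.Gamma (α * k + 1)) :=
          hratio k
      _ ≤ (1/2) * (l ^ k / Real.Gamma (α * k + 1)) := mul_le_mul_of_nonneg_right hk hnn2
  refine summable_of_ratio_norm_eventually_le (r := 1/2) (by norm_num) ?_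
  filter_upwards [hev] with k hk
  convert hk using 4
  · rfl
  push_cast; ring

lemma stable_exp_decay_int (hmeas : Measurable f) (hnn : ∀ x, 0 ≤ f x)
    (hint : Integrable f) {s : ℝ} (hs : 0 < s) :
    IntegrableOn (fun x => Real.exp (-(s * x)) * f x) (Set.Ioi 0) := by
  refine Integrable.mono' hint.integrableOn ?_ ?_
  · exact ((Real.measurable_exp.comp ((measurable_const.mul measurable_id).neg)).mul
      hmeas).aestronglyMeasurable
  · refine (ae_restrict_iff' measurableSet_Ioi).mpr (ae_of_all _ fun x hx => ?_)
    have hx0 : 0 < x := hx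
    have h1 : Real.exp (-(s * x)) ≤ 1 := by
      rw [Real.exp_le_one_iff]; nlinarith
    have := hnn x
    rw [Real.norm_eq_abs, abs_of_nonneg (by positivity)]
    nlinarith

lemma gamma_like_int (hα0 : 0 < α) (hα1 : α < 1) {p : ℝ} (hp : 0 < p) :
    IntegrableOn (fun s : ℝ => s ^ (p - 1) * Real.exp (-(s ^ α))) (Set.Ioi 0) := by
  have hαne : α ≠ 0 := hα0.ne'
  have hF : IntegrableOn (fun u : ℝ => Real.exp (-u) * u ^ (p / α - 1)) (Set.Ioi 0) :=
    Real.GammaIntegral_convergent (by positivity)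
  have := (integrableOn_Ioi_comp_rpow_iff (fun u : ℝ => Real.exp (-u) * u ^ (p / α - 1))
    hαne).mpr hF
  have h2 : IntegrableOn
      (fun x : ℝ => (|α| * x ^ (α - 1)) • (Real.exp (-(x ^ α)) * (x ^ α) ^ (p / α - 1)))
      (Set.Ioi 0) := this
  have h3 : IntegrableOn (fun x : ℝ => α * (x ^ (p - 1) * Real.exp (-(x ^ α)))) (Set.Ioi 0) := by
    refine h2.congr_fun (fun x hx => ?_) measurableSet_Ioi
    have hx0 : (0:ℝ) < x := hx
    dsimp only; rw [smul_eq_mul, abs_of_pos hα0]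
    have hxp : (x ^ α) ^ (p / α - 1) = x ^ (p - α) := by
      rw [← Real.rpow_mul hx0.le]; congr 1; field_simp
    have hxx : x ^ (α - 1) * x ^ (p - α) = x ^ (p - 1) := by
      rw [← Real.rpow_add hx0]; congr 1; ring
    rw [hxp, show α * x ^ (α - 1) * (Real.exp (-x ^ α) * x ^ (p - α))
      = α * (x ^ (α - 1) * x ^ (p - α) * Real.exp (-x ^ α)) from by ring, hxx]
  have h5 : (fun x : ℝ => (1 / α) * (α * (x ^ (p - 1) * Real.exp (-x ^ α))))
      = fun s : ℝ => s ^ (p - 1) * Real.exp (-(s ^ α)) := by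
    funext x; rw [one_div, inv_mul_cancel_left₀ hαne]
  exact h5 ▸ (h3.const_mul (1 / α))

lemma gamma_like_val (hα0 : 0 < α) {p : ℝ} (hp : 0 < p) :
    ∫ s in Set.Ioi (0:ℝ), s ^ (p - 1) * Real.exp (-(s ^ α)) = (1 / α) * Real.Gamma (p / α) := by
  have := integral_rpow_mul_exp_neg_rpow (p := α) (q := p - 1) hα0 (by linarith)
  rw [sub_add_cancel] at this
  simpa using this

lemma moment_lemma (hα0 : 0 < α) (hα1 : α < 1)
    (hmeas : Measurable f) (hnn : ∀ x, 0 ≤ f x) (hint : Integrable f)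
    (hlap : ∀ s > (0:ℝ),
      (∫ x in Set.Ioi (0:ℝ), Real.exp (-(s * x)) * f x) = Real.exp (-(s ^ α)))
    {p : ℝ} (hp : 0 < p) :
    IntegrableOn (fun x => x ^ (-p) * f x) (Set.Ioi 0) ∧
    ∫ x in Set.Ioi (0:ℝ), x ^ (-p) * f x = Real.Gamma (p / α) / (α * Real.Gamma p) := by
  have hΓp : 0 < Real.Gamma p := Real.Gamma_pos_of_pos hp
  have hΓpα : 0 < Real.Gamma (p / α) := Real.Gamma_pos_of_pos (by positivity)
  -- inner values
  have hL : ∀ x ∈ Set.Ioi (0:ℝ),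
      (∫⁻ s in Set.Ioi (0:ℝ), ENNReal.ofReal (s ^ (p - 1) * Real.exp (-(s * x)) * f x))
        = ENNReal.ofReal (Real.Gamma p * (x ^ (-p) * f x)) := by
    intro x hx
    have hx0 : (0:ℝ) < x := hx
    have hi0 : IntegrableOn (fun t : ℝ => t ^ (p - 1) * Real.exp (-x * t ^ (1:ℝ)))
        (Set.Ioi 0) := integrableOn_rpow_mul_exp_neg_mul_rpow (by linarith) one_pos hx0
    have hi : IntegrableOn (fun s : ℝ => s ^ (p - 1) * Real.exp (-(s * x)) * f x)
        (Set.Ioi 0) := by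
      refine IntegrableOn.congr_fun (hi0.mul_const (f x)) (fun s _ => ?_) measurableSet_Ioi
      rw [Real.rpow_one]; ring_nf
    have hnn' : 0 ≤ᵐ[volume.restrict (Set.Ioi (0:ℝ))]
        fun s : ℝ => s ^ (p - 1) * Real.exp (-(s * x)) * f x := by
      refine (ae_restrict_iff' measurableSet_Ioi).mpr (ae_of_all _ fun s hs => ?_)
      have : (0:ℝ) < s := hs
      have := hnn x
      positivity
    rw [← ofReal_integral_eq_lintegral_ofReal hi hnn']
    congr 1
    rw [MeasureTheory.integral_mul_const]
    have hval : ∫ s in Set.Ioi (0:ℝ), s ^ (p - 1) * Real.exp (-(s * x))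
        = x ^ (-p) * Real.Gamma p := by
      have h := integral_rpow_mul_exp_neg_mul_rpow (p := 1) (q := p - 1) (b := x)
        one_pos (by linarith) hx0
      rw [show (∫ s in Set.Ioi (0:ℝ), s ^ (p - 1) * Real.exp (-(s * x)))
          = ∫ t in Set.Ioi (0:ℝ), t ^ (p - 1) * Real.exp (-x * t ^ (1:ℝ)) from
        setIntegral_congr_fun measurableSet_Ioi (fun t _ => by rw [Real.rpow_one]; ring_nf)]
      rw [h, sub_add_cancel]
      norm_num
    rw [hval]; ring
  have hR : ∀ s ∈ Set.Ioi (0:ℝ),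
      (∫⁻ x in Set.Ioi (0:ℝ), ENNReal.ofReal (s ^ (p - 1) * Real.exp (-(s * x)) * f x))
        = ENNReal.ofReal (s ^ (p - 1) * Real.exp (-(s ^ α))) := by
    intro s hs
    have hs0 : (0:ℝ) < s := hs
    have hi0 : IntegrableOn (fun x => Real.exp (-(s * x)) * f x) (Set.Ioi 0) :=
      stable_exp_decay_int hmeas hnn hint hs0
    have hi : IntegrableOn (fun x => s ^ (p - 1) * (Real.exp (-(s * x)) * f x)) (Set.Ioi 0) :=
      hi0.const_mul _
    have hnn' : 0 ≤ᵐ[volume.restrict (Set.Ioi (0:ℝ))]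
        fun x : ℝ => s ^ (p - 1) * (Real.exp (-(s * x)) * f x) := by
      refine (ae_restrict_iff' measurableSet_Ioi).mpr (ae_of_all _ fun x _ => ?_)
      have := hnn x
      positivity
    calc (∫⁻ x in Set.Ioi (0:ℝ), ENNReal.ofReal (s ^ (p - 1) * Real.exp (-(s * x)) * f x))
        = ∫⁻ x in Set.Ioi (0:ℝ), ENNReal.ofReal (s ^ (p - 1) * (Real.exp (-(s * x)) * f x)) := by
          simp_rw [mul_assoc]
      _ = ENNReal.ofReal (∫ x in Set.Ioi (0:ℝ), s ^ (p - 1) * (Real.exp (-(s * x)) * f x)) :=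
          (ofReal_integral_eq_lintegral_ofReal hi hnn').symm
      _ = ENNReal.ofReal (s ^ (p - 1) * Real.exp (-(s ^ α))) := by
          rw [MeasureTheory.integral_const_mul, hlap s hs0]
  -- Tonelli swap
  have hunc : Measurable fun q : ℝ × ℝ =>
      ENNReal.ofReal (q.2 ^ (p - 1) * Real.exp (-(q.2 * q.1)) * f q.1) := by
    apply ENNReal.measurable_ofReal.comp
    exact ((measurable_snd.pow measurable_const).mul
      (Real.measurable_exp.comp ((measurable_snd.mul measurable_fst).neg))).mul
      (hmeas.comp measurable_fst)
  have hswap : (∫⁻ x in Set.Ioi (0:ℝ), ∫⁻ s in Set.Ioi (0:ℝ),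
        ENNReal.ofReal (s ^ (p - 1) * Real.exp (-(s * x)) * f x))
      = ∫⁻ s in Set.Ioi (0:ℝ), ∫⁻ x in Set.Ioi (0:ℝ),
        ENNReal.ofReal (s ^ (p - 1) * Real.exp (-(s * x)) * f x) :=
    lintegral_lintegral_swap hunc.aemeasurable
  have keyL : (∫⁻ x in Set.Ioi (0:ℝ), ENNReal.ofReal (Real.Gamma p * (x ^ (-p) * f x)))
      = ENNReal.ofReal ((1 / α) * Real.Gamma (p / α)) := by
    calc (∫⁻ x in Set.Ioi (0:ℝ), ENNReal.ofReal (Real.Gamma p * (x ^ (-p) * f x)))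
        = ∫⁻ x in Set.Ioi (0:ℝ), ∫⁻ s in Set.Ioi (0:ℝ),
            ENNReal.ofReal (s ^ (p - 1) * Real.exp (-(s * x)) * f x) :=
          (setLIntegral_congr_fun measurableSet_Ioi hL).symm
      _ = ∫⁻ s in Set.Ioi (0:ℝ), ∫⁻ x in Set.Ioi (0:ℝ),
            ENNReal.ofReal (s ^ (p - 1) * Real.exp (-(s * x)) * f x) := hswap
      _ = ∫⁻ s in Set.Ioi (0:ℝ), ENNReal.ofReal (s ^ (p - 1) * Real.exp (-(s ^ α))) :=
          setLIntegral_congr_fun measurableSet_Ioi hR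
      _ = ENNReal.ofReal ((1 / α) * Real.Gamma (p / α)) := by
          rw [← ofReal_integral_eq_lintegral_ofReal (gamma_like_int hα0 hα1 hp) ?_,
            gamma_like_val hα0 hp]
          refine (ae_restrict_iff' measurableSet_Ioi).mpr (ae_of_all _ fun s hs => ?_)
          have : (0:ℝ) < s := hs
          positivity
  -- extract K
  set K := ∫⁻ x in Set.Ioi (0:ℝ), ENNReal.ofReal (x ^ (-p) * f x) with hKdef
  have hmain : ENNReal.ofReal (Real.Gamma p) * K = ENNReal.ofReal ((1 / α) * Real.Gamma (p / α)) := by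
    rw [← keyL, ← lintegral_const_mul' _ _ ENNReal.ofReal_ne_top]
    refine lintegral_congr fun x => ?_
    rw [← ENNReal.ofReal_mul hΓp.le]
  have hc0 : ENNReal.ofReal (Real.Gamma p) ≠ 0 := by
    simp [ENNReal.ofReal_eq_zero, not_le, hΓp]
  have hK : K = ENNReal.ofReal (Real.Gamma (p / α) / (α * Real.Gamma p)) := by
    have h1 : K = (ENNReal.ofReal (Real.Gamma p))⁻¹
        * ENNReal.ofReal ((1 / α) * Real.Gamma (p / α)) := by
      rw [← hmain, ← mul_assoc, ENNReal.inv_mul_cancel hc0 ENNReal.ofReal_ne_top, one_mul]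
    rw [h1, ← ENNReal.ofReal_inv_of_pos hΓp, ← ENNReal.ofReal_mul (by positivity)]
    congr 1
    field_simp
  have hmeas2 : Measurable fun x : ℝ => x ^ (-p) * f x :=
    (measurable_id.pow measurable_const).mul hmeas
  have hnn2 : 0 ≤ᵐ[volume.restrict (Set.Ioi (0:ℝ))] fun x : ℝ => x ^ (-p) * f x := by
    refine (ae_restrict_iff' measurableSet_Ioi).mpr (ae_of_all _ fun x hx => ?_)
    have hx0 : (0:ℝ) < x := hx
    have := hnn x
    positivity
  have hfin : IntegrableOn (fun x => x ^ (-p) * f x) (Set.Ioi 0) := by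
    refine ⟨hmeas2.aestronglyMeasurable, ?_⟩
    rw [hasFiniteIntegral_iff_norm]
    have : (∫⁻ x in Set.Ioi (0:ℝ), ENNReal.ofReal ‖x ^ (-p) * f x‖) = K := by
      refine lintegral_congr_ae (hnn2.mono fun x hx => ?_)
      simp only [Pi.zero_apply] at hx
      dsimp only
      rw [Real.norm_eq_abs, abs_of_nonneg hx]
    rw [this, hK]
    exact ENNReal.ofReal_lt_top
  refine ⟨hfin, ?_⟩
  rw [integral_eq_lintegral_of_nonneg_ae hnn2 hmeas2.aestronglyMeasurable, ← hKdef, hK,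
    ENNReal.toReal_ofReal (by positivity)]

lemma mass_one (hα0 : 0 < α) (hmeas : Measurable f) (hnn : ∀ x, 0 ≤ f x)
    (hint : Integrable f)
    (hlap : ∀ s > (0:ℝ),
      (∫ x in Set.Ioi (0:ℝ), Real.exp (-(s * x)) * f x) = Real.exp (-(s ^ α))) :
    ∫ x in Set.Ioi (0:ℝ), f x = 1 := by
  set s : ℕ → ℝ := fun n => (1 / ((n:ℝ) + 1)) ^ (1 / α) with hsdef
  have hspos : ∀ n, 0 < s n := fun n => Real.rpow_pos_of_pos (by positivity) _
  have hs0 : Tendsto (fun n : ℕ => 1 / ((n:ℝ) + 1)) atTop (𝓝 0) :=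
    tendsto_one_div_add_atTop_nhds_zero_nat
  have hstend : Tendsto s atTop (𝓝 0) := by
    have := hs0.rpow_const (p := 1 / α) (Or.inr (by positivity))
    rwa [Real.zero_rpow (by positivity : (1:ℝ)/α ≠ 0)] at this
  -- LHS limit by dominated convergence
  have h1 : Tendsto (fun n => ∫ x in Set.Ioi (0:ℝ), Real.exp (-(s n * x)) * f x) atTop
      (𝓝 (∫ x in Set.Ioi (0:ℝ), f x)) := by
    refine tendsto_integral_of_dominated_convergence f ?_ hint.integrableOn ?_ ?_
    · intro n
      exact ((Real.measurable_exp.comp ((measurable_const.mul measurable_id).neg)).mul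
        hmeas).aestronglyMeasurable
    · intro n
      refine (ae_restrict_iff' measurableSet_Ioi).mpr (ae_of_all _ fun x hx => ?_)
      have hx0 : (0:ℝ) < x := hx
      have h1 : Real.exp (-(s n * x)) ≤ 1 := by
        rw [Real.exp_le_one_iff]; nlinarith [hspos n]
      have := hnn x
      rw [Real.norm_eq_abs, abs_of_nonneg (by positivity)]
      nlinarith
    · refine ae_of_all _ fun x => ?_
      have : Tendsto (fun n => Real.exp (-(s n * x))) atTop (𝓝 1) := by
        have h2 : Tendsto (fun n => -(s n * x)) atTop (𝓝 0) := by
          have h3 := (hstend.mul_const x).neg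
          rw [zero_mul, neg_zero] at h3
          exact h3
        have := (Real.continuous_exp.tendsto 0).comp h2
        simpa [Function.comp_def] using this
      have := this.mul_const (f x)
      simpa using this
  -- RHS limit
  have h2 : Tendsto (fun n => ∫ x in Set.Ioi (0:ℝ), Real.exp (-(s n * x)) * f x) atTop (𝓝 1) := by
    have heq : ∀ n, (∫ x in Set.Ioi (0:ℝ), Real.exp (-(s n * x)) * f x)
        = Real.exp (-(1 / ((n:ℝ) + 1))) := by
      intro n
      rw [hlap (s n) (hspos n)]
      congr 1
      rw [hsdef]
      rw [← Real.rpow_mul (by positivity), one_div_mul_cancel hα0.ne', Real.rpow_one]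
    simp_rw [heq]
    have h4 := hs0.neg
    rw [neg_zero] at h4
    have := (Real.continuous_exp.tendsto 0).comp h4
    simpa [Function.comp_def] using this
  exact tendsto_nhds_unique h1 h2

lemma moment_nat (hα0 : 0 < α) (hα1 : α < 1)
    (hmeas : Measurable f) (hnn : ∀ x, 0 ≤ f x) (hint : Integrable f)
    (hlap : ∀ s > (0:ℝ),
      (∫ x in Set.Ioi (0:ℝ), Real.exp (-(s * x)) * f x) = Real.exp (-(s ^ α)))
    (k : ℕ) :
    IntegrableOn (fun x => x ^ (-(α * (k:ℝ))) * f x) (Set.Ioi 0) ∧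
    ∫ x in Set.Ioi (0:ℝ), x ^ (-(α * (k:ℝ))) * f x
      = (k.factorial : ℝ) / Real.Gamma (α * k + 1) := by
  rcases Nat.eq_zero_or_pos k with rfl | hk
  · constructor
    · refine IntegrableOn.congr_fun hint.integrableOn (fun x _ => ?_) measurableSet_Ioi
      simp
    · rw [show (∫ x in Set.Ioi (0:ℝ), x ^ (-(α * ((0:ℕ):ℝ))) * f x)
        = ∫ x in Set.Ioi (0:ℝ), f x from
          setIntegral_congr_fun measurableSet_Ioi (fun x _ => by simp)]
      rw [mass_one hα0 hmeas hnn hint hlap]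
      simp [Real.Gamma_one]
  · have hkR : (1:ℝ) ≤ (k:ℝ) := by exact_mod_cast hk
    have hp : 0 < α * (k:ℝ) := by nlinarith
    obtain ⟨h1, h2⟩ := moment_lemma hα0 hα1 hmeas hnn hint hlap hp
    refine ⟨h1, ?_⟩
    rw [h2]
    have hdiv : α * (k:ℝ) / α = (k:ℝ) := by field_simp
    rw [hdiv]
    obtain ⟨m, rfl⟩ := Nat.exists_eq_add_of_le hk
    have hcast : ((1 + m : ℕ) : ℝ) = (m:ℝ) + 1 := by push_cast; ring
    have hΓk : Real.Gamma ((1 + m : ℕ) : ℝ) = (m.factorial : ℝ) := by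
      rw [hcast, Real.Gamma_nat_eq_factorial]
    have hΓ1 : Real.Gamma (α * ((1 + m : ℕ):ℝ) + 1)
        = α * ((1 + m : ℕ):ℝ) * Real.Gamma (α * ((1 + m : ℕ):ℝ)) := by
      rw [Real.Gamma_add_one (by positivity)]
    have hΓpos : 0 < Real.Gamma (α * ((1 + m : ℕ):ℝ)) := Real.Gamma_pos_of_pos hp
    rw [hΓk, hΓ1]
    have hfact : ((1 + m).factorial : ℝ) = ((1 + m : ℕ):ℝ) * (m.factorial : ℝ) := by
      rw [show 1 + m = m + 1 by ring, Nat.factorial_succ]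
      push_cast; ring
    rw [hfact]
    have hknz : ((1 + m : ℕ):ℝ) ≠ 0 := by positivity
    field_simp

lemma key_rep (hα0 : 0 < α) (hα1 : α < 1)
    (hmeas : Measurable f) (hnn : ∀ x, 0 ≤ f x) (hint : Integrable f)
    (hlap : ∀ s > (0:ℝ),
      (∫ x in Set.Ioi (0:ℝ), Real.exp (-(s * x)) * f x) = Real.exp (-(s ^ α)))
    {lam : ℝ} (hlam : 0 ≤ lam) :
    (∫ x in Set.Ioi (0:ℝ), Real.exp (-(lam * x ^ (-α))) * f x)
      = ∑' k : ℕ, (-lam) ^ k / Real.Gamma (α * k + 1) := by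
  set F : ℕ → ℝ → ℝ :=
    fun k x => ((-lam) ^ k / (k.factorial : ℝ)) * (x ^ (-(α * (k:ℝ))) * f x) with hFdef
  have hM := fun k => moment_nat hα0 hα1 hmeas hnn hint hlap k
  have hΓpos : ∀ k : ℕ, 0 < Real.Gamma (α * k + 1) := fun k =>
    Real.Gamma_pos_of_pos (by positivity)
  have hFmeas : ∀ k, AEStronglyMeasurable (F k) (volume.restrict (Set.Ioi (0:ℝ))) := by
    intro k
    exact (((measurable_id.pow measurable_const).mul hmeas).const_mul _).aestronglyMeasurable
  -- lintegral of norms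
  have hlint : ∀ k : ℕ, (∫⁻ x in Set.Ioi (0:ℝ), ‖F k x‖₊)
      = ENNReal.ofReal (lam ^ k / Real.Gamma (α * k + 1)) := by
    intro k
    have habs : ∀ x ∈ Set.Ioi (0:ℝ), (‖F k x‖₊ : ℝ≥0∞)
        = ENNReal.ofReal ((lam ^ k / (k.factorial : ℝ)) * (x ^ (-(α * (k:ℝ))) * f x)) := by
      intro x hx
      have hx0 : (0:ℝ) < x := hx
      rw [← enorm_eq_nnnorm, ← ofReal_norm, Real.norm_eq_abs, hFdef]
      congr 1
      rw [abs_mul, abs_div, abs_pow, abs_neg, abs_of_nonneg hlam,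
        abs_of_nonneg (by positivity : (0:ℝ) ≤ (k.factorial : ℝ)),
        abs_of_nonneg (by have := hnn x; positivity)]
    rw [setLIntegral_congr_fun measurableSet_Ioi habs,
      ← ofReal_integral_eq_lintegral_ofReal ((hM k).1.const_mul _) ?_]
    · rw [MeasureTheory.integral_const_mul, (hM k).2]
      congr 1
      have : (k.factorial : ℝ) ≠ 0 := by positivity
      field_simp
    · refine (ae_restrict_iff' measurableSet_Ioi).mpr (ae_of_all _ fun x hx => ?_)
      have hx0 : (0:ℝ) < x := hx
      have := hnn x
      positivity
  -- sum of lintegrals finite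
  have hsum : (∑' k : ℕ, ∫⁻ x in Set.Ioi (0:ℝ), ‖F k x‖₊) ≠ ⊤ := by
    simp_rw [hlint]
    rw [← ENNReal.ofReal_tsum_of_nonneg (fun k => by positivity)
      (ml_summable hα0 hα1 hlam)]
    exact ENNReal.ofReal_ne_top
  have hswap := MeasureTheory.integral_tsum hFmeas hsum
  -- pointwise identity
  have hpt : ∀ x ∈ Set.Ioi (0:ℝ),
      Real.exp (-(lam * x ^ (-α))) * f x = ∑' k : ℕ, F k x := by
    intro x hx
    have hx0 : (0:ℝ) < x := hx
    have hexp : Real.exp (-(lam * x ^ (-α)))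
        = ∑' k : ℕ, (-(lam * x ^ (-α))) ^ k / (k.factorial : ℝ) := by
      rw [Real.exp_eq_exp_ℝ, NormedSpace.exp_eq_tsum_div]
    rw [hexp, ← tsum_mul_right]
    refine tsum_congr fun k => ?_
    have hy : (x ^ (-α)) ^ k = x ^ (-(α * (k:ℝ))) := by
      rw [← Real.rpow_natCast (x ^ (-α)) k, ← Real.rpow_mul hx0.le]
      congr 1
      ring
    rw [hFdef]
    dsimp only
    rw [show -(lam * x ^ (-α)) = (-lam) * x ^ (-α) by ring, mul_pow, hy]
    ring
  -- conclude
  rw [setIntegral_congr_fun measurableSet_Ioi hpt, hswap]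
  refine tsum_congr fun k => ?_
  rw [hFdef]
  dsimp only
  rw [MeasureTheory.integral_const_mul, (hM k).2]
  have : (k.factorial : ℝ) ≠ 0 := by positivity
  field_simp

lemma cov_lemma (hα0 : 0 < α) (lam : ℝ) :
    (∫ x in Set.Ioi (0:ℝ), Real.exp (-(lam * x ^ (-α))) * f x)
      = (1 / α) * ∫ t in Set.Ioi (0:ℝ),
          Real.exp (-(lam * t)) * f (t ^ (-(1/α))) * t ^ (-(1/α) - 1) := by
  set g : ℝ → ℝ := fun y => Real.exp (-(lam * y)) * f (y ^ (-(1/α))) * y ^ (-(1/α) - 1)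
    with hgdef
  have hsub := integral_comp_rpow_Ioi g (p := -α) (by simpa using hα0.ne')
  have hpt : ∀ x ∈ Set.Ioi (0:ℝ),
      (|(-α)| * x ^ (-α - 1)) • g (x ^ (-α))
        = α * (Real.exp (-(lam * x ^ (-α))) * f x) := by
    intro x hx
    have hx0 : (0:ℝ) < x := hx
    have h1 : (x ^ (-α)) ^ (-(1/α)) = x := by
      rw [← Real.rpow_mul hx0.le, show -α * -(1/α) = 1 by field_simp, Real.rpow_one]
    have h2 : (x ^ (-α)) ^ (-(1/α) - 1) = x ^ (1 + α) := by
      rw [← Real.rpow_mul hx0.le]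
      congr 1
      field_simp
      ring
    have h3 : x ^ (-α - 1) * x ^ (1 + α) = 1 := by
      rw [← Real.rpow_add hx0, show -α - 1 + (1 + α) = 0 by ring, Real.rpow_zero]
    have habs : |(-α)| = α := by rw [abs_neg, abs_of_pos hα0]
    rw [hgdef, smul_eq_mul]
    dsimp only
    rw [h1, h2, habs]
    calc α * x ^ (-α - 1) * (Real.exp (-(lam * x ^ (-α))) * f x * x ^ (1 + α))
        = α * (Real.exp (-(lam * x ^ (-α))) * f x) * (x ^ (-α - 1) * x ^ (1 + α)) := by ring
      _ = α * (Real.exp (-(lam * x ^ (-α))) * f x) := by rw [h3, mul_one]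
  rw [setIntegral_congr_fun measurableSet_Ioi hpt] at hsub
  rw [MeasureTheory.integral_const_mul] at hsub
  rw [← hsub]
  field_simp

lemma Gn_integrable (hmeas : Measurable f) (hnn : ∀ x, 0 ≤ f x) (hint : Integrable f)
    (n : ℕ) {l : ℝ} (hl : 0 < l) :
    IntegrableOn (fun x => (-(x ^ (-α))) ^ n * Real.exp (-(l * x ^ (-α))) * f x)
      (Set.Ioi 0) := by
  refine Integrable.mono' ((hint.integrableOn).const_mul ((n.factorial : ℝ) * (2 / l) ^ n)) ?_ ?_
  · exact ((((measurable_id.pow measurable_const).neg.pow_const n).mul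
      (Real.measurable_exp.comp
        ((measurable_const.mul (measurable_id.pow measurable_const)).neg))).mul
      hmeas).aestronglyMeasurable
  · refine (ae_restrict_iff' measurableSet_Ioi).mpr (ae_of_all _ fun x hx => ?_)
    have hx0 : (0:ℝ) < x := hx
    set y := x ^ (-α) with hy
    have hy0 : 0 ≤ y := Real.rpow_nonneg hx0.le _
    have hb := pow_mul_exp_le_aux n hl hy0
    have hfx := hnn x
    rw [Real.norm_eq_abs, abs_mul, abs_mul, abs_pow, abs_neg, abs_of_nonneg hy0,
      abs_of_nonneg (Real.exp_nonneg _), abs_of_nonneg hfx]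
    calc y ^ n * Real.exp (-(l * y)) * f x
        ≤ (n.factorial : ℝ) * (2 / l) ^ n * f x := by
          exact mul_le_mul_of_nonneg_right hb hfx
      _ = (n.factorial : ℝ) * (2 / l) ^ n * f x := rfl

lemma Gn_deriv (hmeas : Measurable f) (hnn : ∀ x, 0 ≤ f x) (hint : Integrable f)
    (n : ℕ) {l₀ : ℝ} (hl₀ : 0 < l₀) :
    HasDerivAt (fun l => ∫ x in Set.Ioi (0:ℝ),
        (-(x ^ (-α))) ^ n * Real.exp (-(l * x ^ (-α))) * f x)
      (∫ x in Set.Ioi (0:ℝ), (-(x ^ (-α))) ^ (n+1) * Real.exp (-(l₀ * x ^ (-α))) * f x) l₀ := by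
  have hε : (0:ℝ) < l₀ / 2 := by linarith
  have hmeasF : ∀ l : ℝ, AEStronglyMeasurable
      (fun x => (-(x ^ (-α))) ^ n * Real.exp (-(l * x ^ (-α))) * f x)
      (volume.restrict (Set.Ioi (0:ℝ))) := fun l =>
    ((((measurable_id.pow measurable_const).neg.pow_const n).mul
      (Real.measurable_exp.comp
        ((measurable_const.mul (measurable_id.pow measurable_const)).neg))).mul
      hmeas).aestronglyMeasurable
  have hmeasF' : AEStronglyMeasurable
      (fun x => (-(x ^ (-α))) ^ (n+1) * Real.exp (-(l₀ * x ^ (-α))) * f x)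
      (volume.restrict (Set.Ioi (0:ℝ))) :=
    ((((measurable_id.pow measurable_const).neg.pow_const (n+1)).mul
      (Real.measurable_exp.comp
        ((measurable_const.mul (measurable_id.pow measurable_const)).neg))).mul
      hmeas).aestronglyMeasurable
  have key := hasDerivAt_integral_of_dominated_loc_of_deriv_le (s := Metric.ball l₀ (l₀ / 2)) (Metric.ball_mem_nhds _ hε)
    (F := fun l x => (-(x ^ (-α))) ^ n * Real.exp (-(l * x ^ (-α))) * f x)
    (F' := fun l x => (-(x ^ (-α))) ^ (n+1) * Real.exp (-(l * x ^ (-α))) * f x)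
    (bound := fun x => ((n+1).factorial : ℝ) * (2 / (l₀ / 2)) ^ (n+1) * f x)
    (Filter.Eventually.of_forall hmeasF) (Gn_integrable hmeas hnn hint n hl₀)
    hmeasF' ?_ ((hint.integrableOn).const_mul _) ?_
  · exact key.2
  · -- bound
    refine (ae_restrict_iff' measurableSet_Ioi).mpr (ae_of_all _ fun x hx => ?_)
    intro l hlmem
    have hx0 : (0:ℝ) < x := hx
    set y := x ^ (-α) with hy
    have hy0 : 0 ≤ y := Real.rpow_nonneg hx0.le _
    have hfx := hnn x
    have hll : l₀ / 2 ≤ l := by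
      have := Metric.mem_ball.mp hlmem
      rw [Real.dist_eq, abs_sub_lt_iff] at this
      linarith [this.2]
    have hexp : Real.exp (-(l * y)) ≤ Real.exp (-(l₀ / 2 * y)) := by
      apply Real.exp_le_exp.mpr
      nlinarith
    have hb := pow_mul_exp_le_aux (n+1) hε hy0
    rw [Real.norm_eq_abs, abs_mul, abs_mul, abs_pow, abs_neg, abs_of_nonneg hy0,
      abs_of_nonneg (Real.exp_nonneg _), abs_of_nonneg hfx]
    calc y ^ (n+1) * Real.exp (-(l * y)) * f x
        ≤ y ^ (n+1) * Real.exp (-(l₀ / 2 * y)) * f x := by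
          refine mul_le_mul_of_nonneg_right (mul_le_mul_of_nonneg_left hexp (by positivity)) hfx
      _ ≤ ((n+1).factorial : ℝ) * (2 / (l₀ / 2)) ^ (n+1) * f x :=
          mul_le_mul_of_nonneg_right hb hfx
  · -- differentiability
    refine ae_of_all _ fun x => ?_
    intro l _
    set y := x ^ (-α) with hy
    have h1 : HasDerivAt (fun l : ℝ => -(l * y)) (-y) l := by
      exact (hasDerivAt_mul_const (x := l) y).neg
    have h2 := h1.exp
    have h3 := (h2.const_mul ((-y) ^ n)).mul_const (f x)
    convert h3 using 1
    show (-(x ^ (-α))) ^ (n+1) * Real.exp (-(l * x ^ (-α))) * f x = _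
    rw [pow_succ]
    ring
    rfl

end Helpers

theorem stmt_14 (α : ℝ) (hα0 : 0 < α) (hα1 : α < 1)
    (f : ℝ → ℝ) (hmeas : Measurable f) (hnn : ∀ x, 0 ≤ f x)
    (hint : Integrable f) (hsupp : ∀ x < (0:ℝ), f x = 0)
    (hlap : ∀ s > (0:ℝ),
      (∫ x in Set.Ioi (0:ℝ), Real.exp (-(s * x)) * f x) = Real.exp (-(s ^ α))) :
    (∀ lam ≥ (0:ℝ),
      mittagLeffler α (-lam)
        = (1 / α) *
            ∫ t in Set.Ioi (0:ℝ),
              Real.exp (-(lam * t)) * f (t ^ (-(1/α))) * t ^ (-(1/α) - 1)) ∧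
    (∀ n : ℕ, ∀ lam > (0:ℝ),
      0 ≤ (-1 : ℝ) ^ n * iteratedDeriv n (fun l : ℝ => mittagLeffler α (-l)) lam) := by
  have hrep : ∀ lam : ℝ, 0 ≤ lam → mittagLeffler α (-lam)
      = ∫ x in Set.Ioi (0:ℝ), Real.exp (-(lam * x ^ (-α))) * f x := by
    intro lam hlam
    unfold mittagLeffler
    exact (key_rep hα0 hα1 hmeas hnn hint hlap hlam).symm
  constructor
  · intro lam hlam
    rw [hrep lam hlam, cov_lemma hα0 lam]
  · intro n lam hlam
    set G : ℕ → ℝ → ℝ := fun m l => ∫ x in Set.Ioi (0:ℝ),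
        (-(x ^ (-α))) ^ m * Real.exp (-(l * x ^ (-α))) * f x with hGdef
    have hG0 : ∀ l : ℝ, 0 ≤ l → (fun l : ℝ => mittagLeffler α (-l)) l = G 0 l := by
      intro l hl
      rw [hGdef]
      dsimp only
      rw [hrep l hl]
      exact setIntegral_congr_fun measurableSet_Ioi fun x _ => by rw [pow_zero, one_mul]
    have hiter : ∀ m : ℕ, ∀ l : ℝ, 0 < l →
        iteratedDeriv m (fun l : ℝ => mittagLeffler α (-l)) l = G m l := by
      intro m
      induction m with
      | zero => intro l hl; rw [iteratedDeriv_zero]; exact hG0 l hl.le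
      | succ m ih =>
        intro l hl
        rw [iteratedDeriv_succ]
        have hev : iteratedDeriv m (fun l : ℝ => mittagLeffler α (-l)) =ᶠ[𝓝 l] G m := by
          filter_upwards [Ioi_mem_nhds hl] with t ht
          exact ih t ht
        rw [hev.deriv_eq, hGdef]
        exact (Gn_deriv hmeas hnn hint m hl).deriv
    rw [hiter n lam hlam, hGdef]
    dsimp only
    rw [← MeasureTheory.integral_const_mul]
    refine setIntegral_nonneg measurableSet_Ioi fun x hx => ?_
    have hx0 : (0:ℝ) < x := hx
    have hy0 : 0 ≤ x ^ (-α) := Real.rpow_nonneg hx0.le _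
    have h11 : (-1:ℝ) ^ n * (-1:ℝ) ^ n = 1 := by rw [← mul_pow]; norm_num
    have hfx := hnn x
    have heq : (-1:ℝ) ^ n * ((-(x ^ (-α))) ^ n * Real.exp (-(lam * x ^ (-α))) * f x)
        = (x ^ (-α)) ^ n * Real.exp (-(lam * x ^ (-α))) * f x := by
      calc (-1:ℝ) ^ n * ((-(x ^ (-α))) ^ n * Real.exp (-(lam * x ^ (-α))) * f x)
          = ((-1:ℝ) ^ n * (-1:ℝ) ^ n) * ((x ^ (-α)) ^ n * Real.exp (-(lam * x ^ (-α))) * f x) := by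
            rw [show (-(x ^ (-α)) : ℝ) = -1 * x ^ (-α) from by ring, mul_pow]
            ring
        _ = (x ^ (-α)) ^ n * Real.exp (-(lam * x ^ (-α))) * f x := by rw [h11, one_mul]
    rw [heq]
    positivity
end
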